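/- Let r ∈ (0,1), λ > 0, x > 0, 0 < y < 1, and set R = (r/(1-r))·e^λ with R ≤ 1. Suppose x is not an integer, and let k₀ be the positive integer with k₀ - 1 ≤ x < k₀. Define f(t) = (λ^y (1-r)^x / Γ(y)) · Σ_{k≥0} [x(x-1)⋯(x-k+1)/k!] · R^k · e^{-λt} · max(t-k,0)^{y-1}. Then f(t) → -∞ as t → (k₀+1)⁺, i.e., f takes negative values on (k₀+1, k₀+2). -/
import Mathlib

open Real Finset Filter Topology

theorem gamma_bernoulli_density_negative
    (r l x y : ℝ) (hr : r ∈ Set.Ioo (0:ℝ) 1) (hl : 0 < l) (hx : 0 < x)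
    (hy : 0 < y) (hy1 : y < 1)
    (R : ℝ) (hR : R = r / (1 - r) * Real.exp l) (hR1 : R ≤ 1)
    (hxnotint : ∀ n : ℤ, x ≠ n)
    (k₀ : ℕ) (hk₀pos : 0 < k₀) (hk₀ : (k₀ : ℝ) - 1 ≤ x ∧ x < k₀)
    (f : ℝ → ℝ)
    (hf : ∀ t, f t = l ^ y * (1 - r) ^ x / Real.Gamma y *
      ∑' k : ℕ, (∏ i ∈ Finset.range k, (x - i)) / (Nat.factorial k) * R ^ k *
        Real.exp (-l * t) * (max (t - k) 0) ^ (y - 1)) :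
    Tendsto f (nhdsWithin ((k₀ : ℝ) + 1) (Set.Ioi ((k₀ : ℝ) + 1))) atBot ∧
      ∃ t ∈ Set.Ioo ((k₀ : ℝ) + 1) ((k₀ : ℝ) + 2), f t < 0 := by
  set T : ℝ := (k₀ : ℝ) + 1 with hT
  set C : ℝ := l ^ y * (1 - r) ^ x / Real.Gamma y with hC
  set c : ℕ → ℝ := fun k => (∏ i ∈ Finset.range k, (x - i)) / (Nat.factorial k) * R ^ k
    with hc
  have hr1 : (0:ℝ) < 1 - r := by linarith [hr.2]
  have hRpos : 0 < R := by
    rw [hR]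
    exact mul_pos (div_pos hr.1 hr1) (Real.exp_pos l)
  have hCpos : 0 < C := by
    rw [hC]
    have := Real.Gamma_pos_of_pos hy
    positivity
  -- the coefficient a = c (k₀+1) is negative
  have hxlt : ∀ i : ℕ, i < k₀ → 0 < x - i := by
    intro i hi
    have h1 : (i:ℝ) ≤ (k₀:ℝ) - 1 := by
      have : (i:ℝ) + 1 ≤ (k₀:ℝ) := by exact_mod_cast hi
      linarith
    have h2 : (i:ℝ) ≤ x := le_trans h1 hk₀.1
    have h3 : x ≠ (i:ℝ) := by exact_mod_cast hxnotint i
    cases lt_or_eq_of_le h2 with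
    | inl h => linarith
    | inr h => exact absurd h.symm h3
  have haneg : c (k₀ + 1) < 0 := by
    have hprod : ∏ i ∈ Finset.range (k₀ + 1), (x - i) < 0 := by
      rw [Finset.prod_range_succ]
      have hpos : 0 < ∏ i ∈ Finset.range k₀, (x - i) :=
        Finset.prod_pos fun i hi => hxlt i (Finset.mem_range.mp hi)
      have hneg : x - (k₀:ℝ) < 0 := by linarith [hk₀.2]
      exact mul_neg_of_pos_of_neg hpos hneg
    have hfac : (0:ℝ) < (Nat.factorial (k₀+1) : ℝ) := by positivity
    have : (∏ i ∈ Finset.range (k₀+1), (x - i)) / (Nat.factorial (k₀+1)) < 0 :=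
      div_neg_of_neg_of_pos hprod hfac
    exact mul_neg_of_neg_of_pos this (pow_pos hRpos _)
  -- f equals on Ioo T (T+1) the finite sum
  have hfin : ∀ t ∈ Set.Ioo T (T + 1), f t =
      C * (∑ k ∈ Finset.range (k₀ + 2), c k * Real.exp (-l * t) * (max (t - k) 0) ^ (y - 1)) := by
    intro t ht
    rw [hf t]
    congr 1
    exact tsum_eq_sum (by
      intro k hk
      have hk' : k₀ + 2 ≤ k := by simpa [Finset.mem_range, not_lt] using hk
      have : t - (k:ℝ) < 0 := by
        have : ((k₀:ℝ) + 2) ≤ (k:ℝ) := by exact_mod_cast hk'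
        have ht2 : t < T + 1 := ht.2
        simp only [hT] at ht2
        linarith
      rw [max_eq_right this.le, Real.zero_rpow (by linarith : y - 1 ≠ 0)]
      ring)
  -- main tendsto
  have hTlt : ∀ k ∈ Finset.range (k₀ + 1), 0 < T - (k:ℝ) := by
    intro k hk
    have : k ≤ k₀ := Nat.lt_succ_iff.mp (Finset.mem_range.mp hk)
    have : (k:ℝ) ≤ (k₀:ℝ) := by exact_mod_cast this
    simp only [hT]; linarith
  have hg : Tendsto (fun t => ∑ k ∈ Finset.range (k₀ + 1),
      c k * Real.exp (-l * t) * (max (t - k) 0) ^ (y - 1)) (𝓝[>] T)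
      (𝓝 (∑ k ∈ Finset.range (k₀ + 1),
        c k * Real.exp (-l * T) * (max (T - k) 0) ^ (y - 1))) := by
    refine (tendsto_finset_sum _ fun k hk => ?_).mono_left nhdsWithin_le_nhds
    have hbase : max (T - (k:ℝ)) 0 ≠ 0 := by
      have := hTlt k hk
      rw [max_eq_left this.le]; exact this.ne'
    have h1 : ContinuousAt (fun t : ℝ => (max (t - (k:ℝ)) 0) ^ (y - 1)) T := by
      apply ContinuousAt.comp (g := fun s : ℝ => s ^ (y - 1))
      · exact Real.continuousAt_rpow_const _ _ (Or.inl hbase)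
      · fun_prop
    exact (continuousAt_const.mul ((Real.continuous_exp.comp (by fun_prop)).continuousAt)).mul h1
  have hh : Tendsto (fun t => c (k₀ + 1) * Real.exp (-l * t) * (max (t - ((k₀:ℕ) + 1 : ℕ)) 0) ^ (y - 1))
      (𝓝[>] T) atBot := by
    have hrpow : Tendsto (fun t : ℝ => (t - T) ^ (y - 1)) (𝓝[>] T) atTop := by
      have h0 : Tendsto (fun t : ℝ => t - T) (𝓝[>] T) (𝓝[>] (0:ℝ)) := by
        apply tendsto_nhdsWithin_of_tendsto_nhds_of_eventually_within
        · have : Tendsto (fun t : ℝ => t - T) (𝓝 T) (𝓝 (T - T)) :=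
            (continuous_id.sub continuous_const).continuousAt
          simpa using this.mono_left nhdsWithin_le_nhds
        · filter_upwards [self_mem_nhdsWithin] with t ht
          simp only [Set.mem_Ioi] at ht ⊢; linarith
      have h1 : Tendsto (fun s : ℝ => s ^ (y - 1)) (𝓝[>] (0:ℝ)) atTop := by
        have : Tendsto (fun s : ℝ => (s ^ (1 - y))⁻¹) (𝓝[>] (0:ℝ)) atTop := by
          apply tendsto_inv_nhdsGT_zero.comp
          apply tendsto_nhdsWithin_of_tendsto_nhds_of_eventually_within
          · have : ContinuousAt (fun s : ℝ => s ^ (1 - y)) 0 :=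
              Real.continuousAt_rpow_const _ _ (Or.inr (by linarith))
            have h2 := this.tendsto.mono_left (nhdsWithin_le_nhds (s := Set.Ioi (0:ℝ)))
            rwa [Real.zero_rpow (by linarith : (1:ℝ) - y ≠ 0)] at h2
          · filter_upwards [self_mem_nhdsWithin] with s hs
            exact Set.mem_Ioi.mpr (Real.rpow_pos_of_pos hs _)
        refine this.congr' ?_
        filter_upwards [self_mem_nhdsWithin] with s hs
        rw [← Real.rpow_neg (le_of_lt hs)]
        ring_nf
      exact h1.comp h0
    have hexp : Tendsto (fun t : ℝ => Real.exp (-l * t)) (𝓝[>] T) (𝓝 (Real.exp (-l * T))) :=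
      ((Real.continuous_exp.comp (by fun_prop)).continuousAt).mono_left nhdsWithin_le_nhds
    have hmul : Tendsto (fun t => Real.exp (-l * t) * (t - T) ^ (y - 1)) (𝓝[>] T) atTop :=
      Filter.Tendsto.pos_mul_atTop (Real.exp_pos _) hexp hrpow
    have hmain : Tendsto (fun t => c (k₀ + 1) * (Real.exp (-l * t) * (t - T) ^ (y - 1)))
        (𝓝[>] T) atBot :=
      Filter.Tendsto.neg_mul_atTop haneg tendsto_const_nhds hmul
    refine hmain.congr' ?_
    filter_upwards [self_mem_nhdsWithin] with t ht
    have h0 : (0:ℝ) < t - T := by simp only [Set.mem_Ioi] at ht; linarith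
    have : ((k₀:ℕ) + 1 : ℕ) = (T : ℝ) := by push_cast [hT]; ring
    rw [show ((((k₀:ℕ) + 1 : ℕ)):ℝ) = T by push_cast [hT]; ring, max_eq_left h0.le]
    ring
  have hS : Tendsto (fun t => ∑ k ∈ Finset.range (k₀ + 2),
      c k * Real.exp (-l * t) * (max (t - k) 0) ^ (y - 1)) (𝓝[>] T) atBot := by
    have := hg.add_atBot hh
    exact this.congr fun t => (Finset.sum_range_succ _ _).symm
  have hft : Tendsto f (𝓝[>] T) atBot := by
    have hCS : Tendsto (fun t => C * (∑ k ∈ Finset.range (k₀ + 2),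
        c k * Real.exp (-l * t) * (max (t - k) 0) ^ (y - 1))) (𝓝[>] T) atBot := by
      exact (tendsto_const_mul_atBot_of_pos hCpos).mpr hS
    refine hCS.congr' ?_
    have hIoo : Set.Ioo T (T + 1) ∈ 𝓝[>] T := by
      apply mem_nhdsWithin.mpr
      exact ⟨Set.Iio (T + 1), isOpen_Iio, by simp, by
        intro t ht
        exact ⟨ht.2, ht.1⟩⟩
    filter_upwards [hIoo] with t ht
    exact (hfin t ht).symm
  constructor
  · exact hft
  · have hev : ∀ᶠ t in 𝓝[>] T, f t < 0 := hft.eventually_lt_atBot 0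
    have hIoo : Set.Ioo T (T + 1) ∈ 𝓝[>] T := by
      apply mem_nhdsWithin.mpr
      exact ⟨Set.Iio (T + 1), isOpen_Iio, by simp, fun t ht => ⟨ht.2, ht.1⟩⟩
    have := (hev.and (eventually_of_mem hIoo fun t ht => ht)).exists
    obtain ⟨t, hft0, htIoo⟩ := this
    refine ⟨t, ⟨htIoo.1, ?_⟩, hft0⟩
    have := htIoo.2
    simp only [hT] at this ⊢
    linarith
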